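/- Let x be a natural number and h ≥ 2. If T^s(x) is odd for all s with 0 ≤ s < h and T^h(x) is even, then x ≡ 2^h − 1 (mod 2^{h+1}). -/

import Mathlib

/-- The 3x+1 map: `T x = x/2` if `x` is even, `(3x+1)/2` if `x` is odd. -/
def T (x : ℕ) : ℕ := if x % 2 = 0 then x / 2 else (3 * x + 1) / 2

lemma T_odd (x : ℕ) (hx : x % 2 = 1) : (T x + 1) * 2 = 3 * (x + 1) := by
  obtain ⟨k, rfl⟩ : ∃ k, x = 2 * k + 1 := ⟨x / 2, by omega⟩
  have : T (2 * k + 1) = 3 * k + 2 := by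
    simp only [T]
    have : (2 * k + 1) % 2 = 1 := by omega
    rw [if_neg (by omega)]
    omega
  rw [this]; ring

lemma aux (h : ℕ) : ∀ x : ℕ, (∀ s : ℕ, s < h → T^[s] x % 2 = 1) →
    (T^[h] x + 1) * 2 ^ h = 3 ^ h * (x + 1) := by
  induction h with
  | zero => intro x _; simp
  | succ n ih =>
    intro x hodd
    have hx : x % 2 = 1 := by simpa using hodd 0 (by omega)
    have h1 : ∀ s : ℕ, s < n → T^[s] (T x) % 2 = 1 := by
      intro s hs
      have := hodd (s + 1) (by omega)
      rwa [Function.iterate_succ_apply] at this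
    have h2 := ih (T x) h1
    have h3 := T_odd x hx
    rw [Function.iterate_succ_apply]
    calc (T^[n] (T x) + 1) * 2 ^ (n + 1)
        = (T^[n] (T x) + 1) * 2 ^ n * 2 := by ring
      _ = 3 ^ n * ((T x + 1) * 2) := by rw [h2]; ring
      _ = 3 ^ n * (3 * (x + 1)) := by rw [h3]
      _ = 3 ^ (n + 1) * (x + 1) := by ring

theorem stmt8 (x h : ℕ) (hh : 2 ≤ h)
    (hodd : ∀ s : ℕ, s < h → T^[s] x % 2 = 1) (heven : T^[h] x % 2 = 0) :
    x % 2 ^ (h + 1) = 2 ^ h - 1 := by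
  have key := aux h x hodd
  have hdvd : 2 ^ h ∣ x + 1 := by
    have hd : 2 ^ h ∣ 3 ^ h * (x + 1) := ⟨T^[h] x + 1, by linarith [key]⟩
    have hcop : Nat.Coprime (2 ^ h) (3 ^ h) :=
      Nat.Coprime.pow h h (by norm_num : Nat.Coprime 2 3)
    exact hcop.dvd_of_dvd_mul_left hd
  obtain ⟨m, hm⟩ := hdvd
  have hpos : 0 < 2 ^ h := Nat.pow_pos (by norm_num)
  have heq : T^[h] x + 1 = 3 ^ h * m := by
    have : (T^[h] x + 1) * 2 ^ h = (3 ^ h * m) * 2 ^ h := by rw [key, hm]; ring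
    exact Nat.eq_of_mul_eq_mul_right hpos this
  have hm_odd : m % 2 = 1 := by
    have h3 : 3 ^ h % 2 = 1 := Nat.pow_mod 3 h 2 ▸ by simp
    have : (3 ^ h * m) % 2 = 1 := by omega
    rcases Nat.mod_two_eq_zero_or_one m with hm0 | hm1
    · exfalso
      obtain ⟨k, rfl⟩ : ∃ k, m = 2 * k := ⟨m / 2, by omega⟩
      have : (3 ^ h * (2 * k)) % 2 = 0 := by
        rw [show 3 ^ h * (2 * k) = 2 * (3 ^ h * k) by ring]; omega
      omega
    · exact hm1
  obtain ⟨k, rfl⟩ : ∃ k, m = 2 * k + 1 := ⟨m / 2, by omega⟩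
  have hm' : x + 1 = 2 ^ (h + 1) * k + 2 ^ h := by rw [hm]; ring
  have hx : x = 2 ^ (h + 1) * k + (2 ^ h - 1) := by omega
  rw [hx, Nat.mul_add_mod, Nat.mod_eq_of_lt]
  have : 2 ^ h < 2 ^ (h + 1) := Nat.pow_lt_pow_succ (by norm_num)
  omega
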